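/- Let B be the unit ball in ℝ^n, n ≥ 2, and let ψ ∈ H_m(ℝ^n) be a harmonic homogeneous polynomial of degree m. Then the function φ(x) = (1 − |x|²)·ψ(x) satisfies Δ²φ = 0 in B, φ = 0 on ∂B, and Δφ + (n+2m)·(∂φ/∂ν) = 0 on ∂B, where ν is the inward unit normal (so ∂φ/∂ν = −∂φ/∂r on |x|=1); i.e., φ is a biharmonic Steklov eigenfunction with eigenvalue λ = n + 2m. -/
import Mathlib

open MvPolynomial

/-- The polynomial Laplacian `Δp = ∑ i ∂²p/∂xᵢ²`. -/
noncomputable def polyLaplacian {n : ℕ} (p : MvPolynomial (Fin n) ℝ) : MvPolynomial (Fin n) ℝ :=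
  ∑ i : Fin n, MvPolynomial.pderiv i (MvPolynomial.pderiv i p)

lemma euler_monomial {n : ℕ} (d : Fin n →₀ ℕ) (c : ℝ) :
    ∑ i : Fin n, X i * pderiv i (monomial d c) =
      ((∑ i : Fin n, d i : ℕ) : ℝ) • monomial d c := by
  have h1 : ∀ i : Fin n, X i * pderiv i (monomial d c) = ((d i : ℝ)) • monomial d c := by
    intro i
    rw [pderiv_monomial]
    by_cases h : d i = 0
    · simp [h]
    · have hd : Finsupp.single i 1 + (d - Finsupp.single i 1) = d := by
        ext j
        by_cases hj : j = i
        · subst hj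
          simp only [Finsupp.add_apply, Finsupp.single_eq_same, Finsupp.tsub_apply]
          omega
        · simp [Finsupp.single_apply, hj, Ne.symm hj]
      rw [X, monomial_mul, one_mul, hd, smul_monomial]
      congr 1
      rw [smul_eq_mul, mul_comm]
  simp_rw [h1, ← Finset.sum_smul]
  congr 1
  push_cast
  rfl

lemma euler {n m : ℕ} {ψ : MvPolynomial (Fin n) ℝ} (h : ψ.IsHomogeneous m) :
    ∑ i : Fin n, X i * pderiv i ψ = (m : ℝ) • ψ := by
  conv_lhs => rw [ψ.as_sum]
  simp_rw [map_sum, Finset.mul_sum]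
  rw [Finset.sum_comm]
  have : ∀ d ∈ ψ.support, ∑ i : Fin n, X i * pderiv i (monomial d (coeff d ψ))
      = (m : ℝ) • monomial d (coeff d ψ) := by
    intro d hd
    rw [euler_monomial]
    congr 2
    have h2 := h (mem_support_iff.mp hd)
    rw [← h2]
    simp [Finsupp.weight_apply, Finsupp.sum]
    exact (Finset.sum_subset (Finset.subset_univ _) (by
      intro x _ hx
      simpa using Finsupp.notMem_support_iff.mp hx)).symm
  rw [Finset.sum_congr rfl this, ← Finset.smul_sum, ← ψ.as_sum]

theorem biharmonic_steklov_eigenfunction (n m : ℕ) (hn : 2 ≤ n)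
    (ψ : MvPolynomial (Fin n) ℝ) (hhom : ψ.IsHomogeneous m) (hharm : polyLaplacian ψ = 0)
    (φ : MvPolynomial (Fin n) ℝ)
    (hφ : φ = (1 - ∑ i : Fin n, (MvPolynomial.X i) ^ 2) * ψ) :
    polyLaplacian (polyLaplacian φ) = 0 ∧
    (∀ x : Fin n → ℝ, ∑ i, (x i) ^ 2 = 1 → MvPolynomial.eval x φ = 0) ∧
    (∀ x : Fin n → ℝ, ∑ i, (x i) ^ 2 = 1 →
      MvPolynomial.eval x (polyLaplacian φ) +
        ((n : ℝ) + 2 * m) * (-(∑ i, x i * MvPolynomial.eval x (MvPolynomial.pderiv i φ))) = 0) := by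
  set S : MvPolynomial (Fin n) ℝ := ∑ i : Fin n, (X i) ^ 2 with hSdefS
  have p2 : ∀ j : Fin n, pderiv j (2 : MvPolynomial (Fin n) ℝ) = 0 := by
    intro j
    rw [show (2 : MvPolynomial (Fin n) ℝ) = C 2 from (map_ofNat C 2).symm, pderiv_C]
  have hS : ∀ j : Fin n, pderiv j S = 2 * X j := by
    intro j
    rw [hSdefS, map_sum]
    rw [Finset.sum_eq_single j]
    · rw [pderiv_pow, pderiv_X_self, mul_one, pow_one]
      norm_num
    · intro i _ hi
      rw [pderiv_pow, pderiv_X_of_ne hi, mul_zero]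
    · simp
  have hD : ∀ j : Fin n, pderiv j φ = (-2) * X j * ψ + (1 - S) * pderiv j ψ := by
    intro j
    rw [hφ, pderiv_mul, map_sub, pderiv_one, hS]
    ring
  have key : ∀ j : Fin n, pderiv j (pderiv j φ) =
      (-2) * ψ + (-4) * (X j * pderiv j ψ) + (1 - S) * pderiv j (pderiv j ψ) := by
    intro j
    rw [hD j, map_add, pderiv_mul, pderiv_mul, pderiv_mul, map_sub, pderiv_one, hS,
      pderiv_X_self, map_neg, p2]
    ring
  have hΔ : polyLaplacian φ = C (-(2*(n:ℝ) + 4*m)) * ψ := by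
    unfold polyLaplacian
    simp_rw [key]
    rw [Finset.sum_add_distrib, Finset.sum_add_distrib, Finset.sum_const, ← Finset.mul_sum,
      ← Finset.mul_sum, euler hhom]
    rw [show ∑ i : Fin n, pderiv i (pderiv i ψ) = polyLaplacian ψ from rfl, hharm, mul_zero,
      add_zero, Finset.card_univ, Fintype.card_fin, nsmul_eq_mul, smul_eq_C_mul]
    simp only [map_neg, map_add, map_mul, map_ofNat, map_natCast]
    ring
  refine ⟨?_, ?_, ?_⟩
  · rw [hΔ]
    show ∑ i : Fin n, pderiv i (pderiv i (C (-(2*(n:ℝ) + 4*m)) * ψ)) = 0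
    simp_rw [pderiv_C_mul]
    rw [← Finset.mul_sum,
      show ∑ i : Fin n, pderiv i (pderiv i ψ) = polyLaplacian ψ from rfl, hharm, mul_zero]
  · intro x hx
    rw [hφ, hSdefS]
    simp only [eval_mul, map_sub, map_one, map_sum, eval_pow, eval_X, hx, sub_self, zero_mul]
  · intro x hx
    have he : ∀ i : Fin n, eval x (pderiv i φ) = -2 * x i * eval x ψ +
        (1 - ∑ j : Fin n, (x j)^2) * eval x (pderiv i ψ) := by
      intro i
      rw [hD i, hSdefS]
      simp only [map_add, eval_mul, map_neg, map_ofNat, eval_X, map_sub, map_one, map_sum,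
        eval_pow]
    rw [hΔ]
    simp_rw [he, hx, eval_mul, eval_C]
    have : ∑ i : Fin n, x i * (-2 * x i * eval x ψ + (1 - 1) * eval x (pderiv i ψ))
        = -2 * eval x ψ := by
      simp_rw [sub_self, zero_mul, add_zero, show ∀ i : Fin n, x i * (-2 * x i * eval x ψ)
        = -2 * eval x ψ * (x i)^2 from fun i => by ring, ← Finset.mul_sum, hx, mul_one]
    rw [this]
    ring
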